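/- Let r ≥ 1 and let x = (x_1,…,x_r), y = (y_1,…,y_r) ∈ ℤ^r. Then x and y lie in the same GL_r(ℤ)-orbit (i.e., there exists an invertible r×r integer matrix M with M·x = y) if and only if for every finite abelian group G, the pushforward of the uniform probability measure on G^r under the map (g_1,…,g_r) ↦ x_1 g_1 + ⋯ + x_r g_r equals the pushforward of the uniform probability measure on G^r under (g_1,…,g_r) ↦ y_1 g_1 + ⋯ + y_r g_r. -/

import Mathlib

open MeasureTheory Matrix

/-- An explicit 2×2 integer linear map on `ℤ × ℤ`. -/
private def mulL (p q u v : ℤ) : (ℤ × ℤ) →ₗ[ℤ] ℤ × ℤ where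
  toFun z := (p * z.1 + q * z.2, u * z.1 + v * z.2)
  map_add' a b := by simp [Prod.ext_iff]; constructor <;> ring
  map_smul' c a := by simp [Prod.ext_iff]; constructor <;> ring

private lemma mulL_apply (p q u v : ℤ) (z : ℤ × ℤ) :
    mulL p q u v z = (p * z.1 + q * z.2, u * z.1 + v * z.2) := rfl

/-- Bezout: there is a linear automorphism of `ℤ²` sending `(a,b)` to `(gcd a b, 0)`. -/
private lemma bezout_LE (a b : ℤ) :
    ∃ e : (ℤ × ℤ) ≃ₗ[ℤ] ℤ × ℤ, e (a, b) = ((Int.gcd a b : ℤ), 0) := by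
  by_cases hg : (Int.gcd a b : ℤ) = 0
  · have ha : a = 0 := by
      have := Int.gcd_eq_zero_iff.mp (by exact_mod_cast hg)
      exact this.1
    have hb : b = 0 := by
      have := Int.gcd_eq_zero_iff.mp (by exact_mod_cast hg)
      exact this.2
    exact ⟨LinearEquiv.refl ℤ _, by simp [ha, hb, hg]⟩
  · set g : ℤ := (Int.gcd a b : ℤ) with hgdef
    set u : ℤ := Int.gcdA a b with hu
    set v : ℤ := Int.gcdB a b with hv
    have hbez : g = a * u + b * v := Int.gcd_eq_gcd_ab a b
    obtain ⟨a', ha⟩ : g ∣ a := Int.gcd_dvd_left a b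
    obtain ⟨b', hb⟩ : g ∣ b := Int.gcd_dvd_right a b
    have key : a' * u + b' * v = 1 := by
      have h2 : g * (a' * u + b' * v) = g * 1 := by
        rw [mul_one]; linear_combination -hbez - u * ha - v * hb
      exact mul_left_cancel₀ hg h2
    refine ⟨LinearEquiv.ofLinear (mulL u v (-b') a') (mulL a' (-v) b' u) ?_ ?_, ?_⟩
    · apply LinearMap.ext; intro z
      simp only [LinearMap.comp_apply, mulL_apply, LinearMap.id_apply, Prod.ext_iff]
      constructor
      · linear_combination z.1 * key
      · linear_combination z.2 * key
    · apply LinearMap.ext; intro z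
      simp only [LinearMap.comp_apply, mulL_apply, LinearMap.id_apply, Prod.ext_iff]
      constructor
      · linear_combination z.1 * key
      · linear_combination z.2 * key
    · simp only [LinearEquiv.ofLinear_apply, mulL_apply, Prod.ext_iff]
      constructor
      · linear_combination -hbez
      · linear_combination -b' * ha + a' * hb

/-- The linear version of `Equiv.piFinSucc`. -/
private def piSuccLE (n : ℕ) : (Fin (n + 1) → ℤ) ≃ₗ[ℤ] ℤ × (Fin n → ℤ) :=
  { (Fin.consEquiv (fun _ : Fin (n + 1) => ℤ)).symm with
    map_add' := fun _ _ => rfl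
    map_smul' := fun _ _ => rfl }

private lemma piSuccLE_apply (n : ℕ) (f : Fin (n + 1) → ℤ) :
    piSuccLE n f = (f 0, fun i => f i.succ) := rfl

private lemma piSuccLE_symm_apply (n : ℕ) (p : ℤ × (Fin n → ℤ)) :
    (piSuccLE n).symm p = Fin.cons p.1 p.2 := by
  rw [LinearEquiv.symm_apply_eq, piSuccLE_apply]
  refine Prod.ext ?_ ?_
  · simp
  · funext i
    simp

private lemma gcd_univ_succ (n : ℕ) (x : Fin (n + 1) → ℤ) :
    Finset.gcd Finset.univ x
      = GCDMonoid.gcd (x 0) (Finset.gcd Finset.univ (fun i : Fin n => x i.succ)) := by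
  rw [Fin.univ_succ, Finset.cons_eq_insert, Finset.gcd_insert, Finset.map_eq_image,
    Finset.gcd_image]
  rfl

private lemma cons_zero_eq_zero (n : ℕ) : (Fin.cons 0 0 : Fin (n + 1) → ℤ) = 0 := by
  funext i
  refine Fin.cases ?_ ?_ i <;> simp

/-- Any integer vector can be carried by a linear automorphism to `(gcd, 0, …, 0)`. -/
private lemma reduce (n : ℕ) (x : Fin (n + 1) → ℤ) :
    ∃ e : (Fin (n + 1) → ℤ) ≃ₗ[ℤ] (Fin (n + 1) → ℤ),
      e x = Fin.cons (Finset.gcd Finset.univ x) 0 := by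
  induction n with
  | zero =>
    have hg : Finset.gcd Finset.univ x = |x 0| := by
      rw [gcd_univ_succ]
      simp [Finset.univ_eq_empty, Int.abs_eq_normalize]
    rcases le_or_gt 0 (x 0) with h | h
    · refine ⟨LinearEquiv.refl ℤ _, ?_⟩
      funext i
      refine Fin.cases ?_ (fun j => j.elim0) i
      rw [Fin.cons_zero, hg, abs_of_nonneg h]
      rfl
    · refine ⟨LinearEquiv.neg ℤ, ?_⟩
      funext i
      refine Fin.cases ?_ (fun j => j.elim0) i
      simp only [LinearEquiv.neg_apply, Pi.neg_apply, Fin.cons_zero, hg]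
      rw [abs_of_neg h]
  | succ n ih =>
    set t : Fin (n + 1) → ℤ := (fun i : Fin (n + 1) => x i.succ) with ht
    obtain ⟨e', he'⟩ := ih t
    obtain ⟨B, hB⟩ := bezout_LE (x 0) (Finset.gcd Finset.univ t)
    refine ⟨(piSuccLE (n + 1)).trans
      (((LinearEquiv.refl ℤ ℤ).prodCongr e').trans
      (((LinearEquiv.refl ℤ ℤ).prodCongr (piSuccLE n)).trans
      ((LinearEquiv.prodAssoc ℤ ℤ ℤ (Fin n → ℤ)).symm.trans
      ((B.prodCongr (LinearEquiv.refl ℤ (Fin n → ℤ))).trans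
      ((LinearEquiv.prodAssoc ℤ ℤ ℤ (Fin n → ℤ)).trans
      (((LinearEquiv.refl ℤ ℤ).prodCongr (piSuccLE n).symm).trans
      (piSuccLE (n + 1)).symm)))))), ?_⟩
    have hgcd : Finset.gcd Finset.univ x
        = ((Int.gcd (x 0) (Finset.gcd Finset.univ t) : ℕ) : ℤ) := by
      rw [gcd_univ_succ]
      exact (Int.coe_gcd _ _).symm
    set gt : ℤ := Finset.gcd Finset.univ t with hgt
    have s1 : (piSuccLE (n + 1)) x = (x 0, t) := rfl
    have s2 : ((LinearEquiv.refl ℤ ℤ).prodCongr e') (x 0, t) = (x 0, (Fin.cons gt 0 : Fin (n+1) → ℤ)) := by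
      simp [he']
    have s3 : ((LinearEquiv.refl ℤ ℤ).prodCongr (piSuccLE n)) (x 0, (Fin.cons gt 0 : Fin (n+1) → ℤ))
        = (x 0, (gt, (0 : Fin n → ℤ))) := by
      simp only [LinearEquiv.prodCongr_apply, LinearEquiv.refl_apply, piSuccLE_apply]
      refine Prod.ext rfl (Prod.ext (by simp) ?_)
      funext i
      simp
    have s4 : (LinearEquiv.prodAssoc ℤ ℤ ℤ (Fin n → ℤ)).symm (x 0, (gt, (0 : Fin n → ℤ)))
        = ((x 0, gt), (0 : Fin n → ℤ)) := rfl
    have s5 : (B.prodCongr (LinearEquiv.refl ℤ (Fin n → ℤ))) ((x 0, gt), (0 : Fin n → ℤ))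
        = ((((Int.gcd (x 0) gt : ℕ) : ℤ), 0), (0 : Fin n → ℤ)) := by
      simp [hB]
    have s6 : (LinearEquiv.prodAssoc ℤ ℤ ℤ (Fin n → ℤ))
          (((((Int.gcd (x 0) gt : ℕ) : ℤ)), 0), (0 : Fin n → ℤ))
        = ((((Int.gcd (x 0) gt : ℕ) : ℤ)), ((0 : ℤ), (0 : Fin n → ℤ))) := rfl
    have s7 : ((LinearEquiv.refl ℤ ℤ).prodCongr (piSuccLE n).symm)
          ((((Int.gcd (x 0) gt : ℕ) : ℤ)), ((0 : ℤ), (0 : Fin n → ℤ)))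
        = ((((Int.gcd (x 0) gt : ℕ) : ℤ)), (0 : Fin (n + 1) → ℤ)) := by
      simp only [LinearEquiv.prodCongr_apply, LinearEquiv.refl_apply, piSuccLE_symm_apply]
      exact Prod.ext rfl (cons_zero_eq_zero n)
    simp only [LinearEquiv.trans_apply]
    rw [s1, s2, s3, s4, s5, s6, s7, piSuccLE_symm_apply, hgcd]

private lemma gcd_nonneg' {β : Type*} (s : Finset β) (f : β → ℤ) : 0 ≤ s.gcd f := by
  rw [← Finset.normalize_gcd, ← Int.abs_eq_normalize]
  exact abs_nonneg _

private lemma exists_gl (r : ℕ) (x y : Fin r → ℤ)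
    (e : (Fin r → ℤ) ≃ₗ[ℤ] (Fin r → ℤ)) (h : e x = y) :
    ∃ M : Matrix.GeneralLinearGroup (Fin r) ℤ, (M : Matrix (Fin r) (Fin r) ℤ) *ᵥ x = y := by
  have hcomp1 : e.toLinearMap ∘ₗ e.symm.toLinearMap = LinearMap.id :=
    LinearMap.ext fun v => by simp
  have hcomp2 : e.symm.toLinearMap ∘ₗ e.toLinearMap = LinearMap.id :=
    LinearMap.ext fun v => by simp
  have h1 : LinearMap.toMatrix' e.toLinearMap * LinearMap.toMatrix' e.symm.toLinearMap = 1 := by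
    rw [← LinearMap.toMatrix'_comp, hcomp1, LinearMap.toMatrix'_id]
  have h2 : LinearMap.toMatrix' e.symm.toLinearMap * LinearMap.toMatrix' e.toLinearMap = 1 := by
    rw [← LinearMap.toMatrix'_comp, hcomp2, LinearMap.toMatrix'_id]
  refine ⟨⟨LinearMap.toMatrix' e.toLinearMap, LinearMap.toMatrix' e.symm.toLinearMap, h1, h2⟩, ?_⟩
  show LinearMap.toMatrix' e.toLinearMap *ᵥ x = y
  rw [← Matrix.toLin'_apply, Matrix.toLin'_toMatrix']
  exact h

private lemma cancel_aux {r : ℕ} {G : Type} [AddCommGroup G]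
    (P Q : Matrix (Fin r) (Fin r) ℤ) (h : Q * P = 1) (g : Fin r → G) (j : Fin r) :
    ∑ i, P i j • (∑ k, Q k i • g k) = g j := by
  have h1 : ∀ i, P i j • (∑ k, Q k i • g k) = ∑ k, (Q k i * P i j) • g k := by
    intro i
    rw [Finset.smul_sum]
    exact Finset.sum_congr rfl fun k _ => by rw [smul_smul, mul_comm]
  simp_rw [h1]
  rw [Finset.sum_comm]
  have h2 : ∀ k, (∑ i, (Q k i * P i j) • g k) = (Q * P) k j • g k := by
    intro k
    rw [Matrix.mul_apply, Finset.sum_smul]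
  simp_rw [h2, h, Matrix.one_apply]
  simp [ite_smul]

private lemma map_count_eq {α : Type*} [MeasurableSpace α] [MeasurableSingletonClass α]
    [Countable α] (τ : α → α) (hbij : Function.Bijective τ) :
    Measure.map τ Measure.count = Measure.count := by
  ext s hs
  rw [Measure.map_apply (measurable_of_countable τ) hs]
  conv_rhs => rw [← Set.image_preimage_eq s hbij.surjective]
  rw [Measure.count_injective_image hbij.injective]

private lemma measures_eq (r : ℕ) (x y : Fin r → ℤ)
    (M : Matrix.GeneralLinearGroup (Fin r) ℤ) (hM : (M : Matrix (Fin r) (Fin r) ℤ) *ᵥ x = y)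
    (G : Type) [AddCommGroup G] [Fintype G] [MeasurableSpace G] [MeasurableSingletonClass G] :
    Measure.map (fun gs : Fin r → G => ∑ i : Fin r, x i • gs i)
        ((Fintype.card (Fin r → G) : ENNReal)⁻¹ • Measure.count)
      = Measure.map (fun gs : Fin r → G => ∑ i : Fin r, y i • gs i)
        ((Fintype.card (Fin r → G) : ENNReal)⁻¹ • Measure.count) := by
  set A : Matrix (Fin r) (Fin r) ℤ := (M : Matrix (Fin r) (Fin r) ℤ) with hA
  set Bm : Matrix (Fin r) (Fin r) ℤ :=
    ((M⁻¹ : Matrix.GeneralLinearGroup (Fin r) ℤ) : Matrix (Fin r) (Fin r) ℤ) with hB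
  have hAB : A * Bm = 1 := M.mul_inv
  have hBA : Bm * A = 1 := M.inv_mul
  set τ : (Fin r → G) → Fin r → G := fun g j => ∑ i, A i j • g i with hτ
  have hbij : Function.Bijective τ :=
    Function.bijective_iff_has_inverse.mpr ⟨fun g j => ∑ i, Bm i j • g i,
      fun g => funext fun j => cancel_aux Bm A hAB g j,
      fun g => funext fun j => cancel_aux A Bm hBA g j⟩
  have hcomp : (fun gs : Fin r → G => ∑ i : Fin r, y i • gs i)
      = (fun gs : Fin r → G => ∑ i : Fin r, x i • gs i) ∘ τ := by
    funext g
    show ∑ i, y i • g i = ∑ k, x k • τ g k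
    rw [← hM]
    simp only [hτ]
    simp only [Finset.smul_sum]
    simp only [Matrix.mulVec, dotProduct, Finset.sum_smul]
    rw [Finset.sum_comm]
    refine Finset.sum_congr rfl fun k _ => Finset.sum_congr rfl fun i _ => ?_
    rw [smul_smul, mul_comm]
  rw [hcomp, ← Measure.map_map (measurable_of_countable _) (measurable_of_countable _),
    show Measure.map τ ((Fintype.card (Fin r → G) : ENNReal)⁻¹ • Measure.count)
        = (Fintype.card (Fin r → G) : ENNReal)⁻¹ • Measure.count from by
      rw [Measure.map_smul, map_count_eq τ hbij]]

private lemma exists_bezout (n : ℕ) (x : Fin (n + 1) → ℤ) :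
    ∃ c : Fin (n + 1) → ℤ, ∑ i, x i * c i = Finset.gcd Finset.univ x := by
  obtain ⟨e, he⟩ := reduce n x
  set f : (Fin (n + 1) → ℤ) →ₗ[ℤ] ℤ := (LinearMap.proj 0).comp e.toLinearMap with hf
  refine ⟨fun i => f (fun j => if i = j then 1 else 0), ?_⟩
  have h1 : f x = Finset.gcd Finset.univ x := by
    simp only [hf, LinearMap.comp_apply, LinearEquiv.coe_coe, LinearMap.proj_apply, he,
      Fin.cons_zero]
  rw [← h1]
  conv_rhs => rw [LinearMap.pi_apply_eq_sum_univ f x]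
  exact Finset.sum_congr rfl fun i _ => (smul_eq_mul _ _).symm

private lemma range_sum_eq (n r : ℕ) (x : Fin (r + 1) → ℤ) :
    Set.range (fun gs : Fin (r + 1) → ZMod n => ∑ i, x i • gs i)
      = Set.range (fun t : ZMod n => ((Finset.gcd Finset.univ x : ℤ) : ZMod n) * t) := by
  obtain ⟨c, hc⟩ := exists_bezout r x
  have hdvd : ∀ i, Finset.gcd Finset.univ x ∣ x i :=
    fun i => Finset.gcd_dvd (Finset.mem_univ i)
  choose m hm using hdvd
  apply Set.Subset.antisymm
  · rintro _ ⟨gs, rfl⟩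
    refine ⟨∑ i, ((m i : ℤ) : ZMod n) * gs i, ?_⟩
    show ((Finset.gcd Finset.univ x : ℤ) : ZMod n) * _ = _
    rw [Finset.mul_sum]
    refine Finset.sum_congr rfl fun i _ => ?_
    rw [zsmul_eq_mul, hm i]
    push_cast
    ring
  · rintro _ ⟨t, rfl⟩
    refine ⟨fun i => ((c i : ℤ) : ZMod n) * t, ?_⟩
    show ∑ i, x i • (((c i : ℤ) : ZMod n) * t) = _
    simp_rw [zsmul_eq_mul]
    rw [← hc]
    push_cast
    rw [Finset.sum_mul]
    refine Finset.sum_congr rfl fun i _ => ?_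
    ring

private lemma range_eq_of_map_eq {r : ℕ} {G : Type} [AddCommGroup G] [Fintype G]
    [MeasurableSpace G] [MeasurableSingletonClass G]
    {f g : (Fin r → G) → G}
    (h : Measure.map f ((Fintype.card (Fin r → G) : ENNReal)⁻¹ • Measure.count)
       = Measure.map g ((Fintype.card (Fin r → G) : ENNReal)⁻¹ • Measure.count)) :
    Set.range f = Set.range g := by
  have hc : ((Fintype.card (Fin r → G) : ENNReal))⁻¹ ≠ 0 :=
    ENNReal.inv_ne_zero.mpr (ENNReal.natCast_ne_top _)
  have key : ∀ f : (Fin r → G) → G, ∀ a : G,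
      (Measure.map f ((Fintype.card (Fin r → G) : ENNReal)⁻¹ • Measure.count) {a} ≠ 0)
        ↔ a ∈ Set.range f := by
    intro f a
    rw [Measure.map_apply (measurable_of_countable f) (measurableSet_singleton a),
      Measure.smul_apply, smul_eq_mul]
    have h0 : Measure.count (f ⁻¹' {a}) ≠ 0 ↔ a ∈ Set.range f := by
      rw [Ne, Measure.count_eq_zero_iff, ← Ne, ← Set.nonempty_iff_ne_empty,
        Set.preimage_singleton_nonempty]
    rw [← h0]
    constructor
    · intro hne h0'
      exact hne (by rw [h0', mul_zero])
    · exact fun h0' => mul_ne_zero hc h0'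
  ext a
  rw [← key f a, ← key g a, h]

private lemma dvd_of_forall_zmod (dx dy : ℤ) (hx : 0 ≤ dx)
    (h : ∀ n : ℕ, n ≠ 0 → ∃ t : ZMod n, (dy : ZMod n) = (dx : ZMod n) * t) :
    dx ∣ dy := by
  rcases eq_or_lt_of_le hx with h0 | hpos
  · obtain ⟨t, ht⟩ := h (dy.natAbs + 1) (Nat.succ_ne_zero _)
    rw [← h0, Int.cast_zero, zero_mul] at ht
    have hdvd := (ZMod.intCast_zmod_eq_zero_iff_dvd dy (dy.natAbs + 1)).mp ht
    have hzero : dy = 0 := by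
      refine Int.eq_zero_of_abs_lt_dvd hdvd ?_
      rw [Int.abs_eq_natAbs]
      push_cast
      omega
    rw [hzero]
    exact dvd_zero _
  · obtain ⟨t, ht⟩ := h dx.natAbs (by omega)
    have hx0 : ((dx : ZMod dx.natAbs)) = 0 := by
      rw [ZMod.intCast_zmod_eq_zero_iff_dvd, Int.natAbs_dvd]
    rw [hx0, zero_mul] at ht
    have hdvd := (ZMod.intCast_zmod_eq_zero_iff_dvd dy dx.natAbs).mp ht
    rwa [Int.natAbs_dvd] at hdvd

/-- Two integer vectors `x, y ∈ ℤ^r` lie in the same `GL_r(ℤ)`-orbit if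
and only if, for every finite abelian group `G`, the pushforward of the uniform probability
measure on `G^r` under `(g_1,…,g_r) ↦ ∑ x_i • g_i` equals the pushforward under
`(g_1,…,g_r) ↦ ∑ y_i • g_i`. -/
theorem glz_orbit_iff_measures_eq (r : ℕ) (hr : 1 ≤ r) (x y : Fin r → ℤ) :
    (∃ M : Matrix.GeneralLinearGroup (Fin r) ℤ,
        (M : Matrix (Fin r) (Fin r) ℤ) *ᵥ x = y)
      ↔ ∀ (G : Type) [AddCommGroup G] [Fintype G] [MeasurableSpace G]
          [MeasurableSingletonClass G],
          Measure.map (fun gs : Fin r → G => ∑ i : Fin r, x i • gs i)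
              ((Fintype.card (Fin r → G) : ENNReal)⁻¹ • Measure.count)
            = Measure.map (fun gs : Fin r → G => ∑ i : Fin r, y i • gs i)
              ((Fintype.card (Fin r → G) : ENNReal)⁻¹ • Measure.count) := by
  obtain ⟨m, rfl⟩ : ∃ m, r = m + 1 := ⟨r - 1, by omega⟩
  constructor
  · rintro ⟨M, hM⟩ G _ _ _ _
    exact measures_eq _ x y M hM G
  · intro H
    have hxnn : 0 ≤ Finset.gcd Finset.univ x := gcd_nonneg' _ _
    have hynn : 0 ≤ Finset.gcd Finset.univ y := gcd_nonneg' _ _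
    have main : ∀ n : ℕ, n ≠ 0 →
        Set.range (fun t : ZMod n => ((Finset.gcd Finset.univ x : ℤ) : ZMod n) * t)
          = Set.range (fun t : ZMod n => ((Finset.gcd Finset.univ y : ℤ) : ZMod n) * t) := by
      intro n hn
      haveI : NeZero n := ⟨hn⟩
      rw [← range_sum_eq n m x, ← range_sum_eq n m y]
      exact range_eq_of_map_eq (H (ZMod n))
    have hd : Finset.gcd Finset.univ x = Finset.gcd Finset.univ y := by
      apply Int.dvd_antisymm hxnn hynn
      · apply dvd_of_forall_zmod _ _ hxnn
        intro n hn
        have hmem : ((Finset.gcd Finset.univ y : ℤ) : ZMod n)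
            ∈ Set.range (fun t : ZMod n => ((Finset.gcd Finset.univ x : ℤ) : ZMod n) * t) := by
          rw [main n hn]
          exact ⟨1, mul_one _⟩
        obtain ⟨t, ht⟩ := hmem
        exact ⟨t, ht.symm⟩
      · apply dvd_of_forall_zmod _ _ hynn
        intro n hn
        have hmem : ((Finset.gcd Finset.univ x : ℤ) : ZMod n)
            ∈ Set.range (fun t : ZMod n => ((Finset.gcd Finset.univ y : ℤ) : ZMod n) * t) := by
          rw [← main n hn]
          exact ⟨1, mul_one _⟩
        obtain ⟨t, ht⟩ := hmem
        exact ⟨t, ht.symm⟩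
    obtain ⟨ex, hex⟩ := reduce m x
    obtain ⟨ey, hey⟩ := reduce m y
    refine exists_gl _ x y (ex.trans ey.symm) ?_
    rw [LinearEquiv.trans_apply, hex, hd, ← hey, LinearEquiv.symm_apply_apply]
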